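/- For 0 < 2k < n, the map φ_k : ℝ^n → ℝ^{n-2k} defined by φ_k(x)_i = P_k · x_{i+k}, where P_k = x_1⋯x_k · x_{n-k+1}⋯x_n, is a Poisson map from (ℝ^n, π_k^{(n)}) to (ℝ^{n-2k}, π_0^{(n-2k)}): for all 1 ≤ i < j ≤ n-2k, {P_k x_{i+k}, P_k x_{j+k}}_k^{(n)} = P_k^2 x_{i+k} x_{j+k}. -/

import Mathlib

open Finset

/-- `ε_{m,ℓ} = 1` if `m > ℓ`, `-1` otherwise. -/
noncomputable def eps (m l : ℕ) : ℝ := if l < m then 1 else -1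

/-- The skew-symmetric Toeplitz matrix `A_k` of size `n`, with
`(A_k)_{i,j} = ε_{n+i,k+j}` for `i < j` (indices 1-based). -/
noncomputable def Amat (n k : ℕ) : Matrix (Fin n) (Fin n) ℝ :=
  fun i j =>
    if i < j then eps (n + i.1 + 1) (k + j.1 + 1)
    else if j < i then -(eps (n + j.1 + 1) (k + i.1 + 1))
    else 0

/-- The diagonal quadratic Poisson bracket `π_k^{(n)}` of two smooth functions:
`{f,g}(x) = ∑_{a,b} (A_k)_{a,b} x_a x_b ∂_a f ∂_b g`. -/
noncomputable def pb (n k : ℕ) (f g : (Fin n → ℝ) → ℝ) (x : Fin n → ℝ) : ℝ :=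
  ∑ a, ∑ b, Amat n k a b * x a * x b
    * fderiv ℝ f x (Pi.single a 1) * fderiv ℝ g x (Pi.single b 1)

/-- `P_k = x_1 ⋯ x_k · x_{n-k+1} ⋯ x_n` (positions 1-based). -/
noncomputable def Pk (n k : ℕ) : (Fin n → ℝ) → ℝ := fun x =>
  ∏ a ∈ univ.filter (fun a : Fin n => a.1 + 1 ≤ k ∨ n - k + 1 ≤ a.1 + 1), x a


lemma prod_fderiv_single {n : ℕ} (T : Finset (Fin n)) (x : Fin n → ℝ) (b : Fin n) :
    x b * fderiv ℝ (fun y : Fin n → ℝ => ∏ a ∈ T, y a) x (Pi.single b 1)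
      = if b ∈ T then ∏ a ∈ T, x a else 0 := by
  have h : HasFDerivAt (fun y : Fin n → ℝ => ∏ a ∈ T, y a)
      (∑ c ∈ T, (∏ a ∈ T.erase c, x a) • ContinuousLinearMap.proj c) x :=
    HasFDerivAt.finset_prod (fun c _ => hasFDerivAt_apply (𝕜 := ℝ) c x)
  rw [h.fderiv]
  simp only [ContinuousLinearMap.sum_apply, ContinuousLinearMap.smul_apply,
    ContinuousLinearMap.proj_apply, smul_eq_mul]
  have : ∀ c ∈ T, (∏ a ∈ T.erase c, x a) * (Pi.single b 1 : Fin n → ℝ) c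
      = if c = b then ∏ a ∈ T.erase b, x a else 0 := by
    intro c _
    rcases eq_or_ne c b with rfl | hcb
    · simp
    · simp [Pi.single_eq_of_ne hcb, hcb]
  rw [Finset.sum_congr rfl this, Finset.sum_ite_eq' T b]
  by_cases hb : b ∈ T
  · simp [hb, Finset.mul_prod_erase T x hb]
  · simp [hb]

lemma pb_prod (n k : ℕ) (T U : Finset (Fin n)) (x : Fin n → ℝ) :
    pb n k (fun y => ∏ a ∈ T, y a) (fun y => ∏ a ∈ U, y a) x
      = (∏ a ∈ T, x a) * (∏ a ∈ U, x a) * ∑ a ∈ T, ∑ b ∈ U, Amat n k a b := by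
  unfold pb
  have hF : ∀ a b : Fin n, Amat n k a b * x a * x b
      * fderiv ℝ (fun y : Fin n → ℝ => ∏ c ∈ T, y c) x (Pi.single a 1)
      * fderiv ℝ (fun y : Fin n → ℝ => ∏ c ∈ U, y c) x (Pi.single b 1)
      = if a ∈ T then (if b ∈ U then Amat n k a b * (∏ c ∈ T, x c) * (∏ c ∈ U, x c) else 0) else 0 := by
    intro a b
    have h1 : Amat n k a b * x a * x b
        * fderiv ℝ (fun y : Fin n → ℝ => ∏ c ∈ T, y c) x (Pi.single a 1)
        * fderiv ℝ (fun y : Fin n → ℝ => ∏ c ∈ U, y c) x (Pi.single b 1)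
        = Amat n k a b
          * (x a * fderiv ℝ (fun y : Fin n → ℝ => ∏ c ∈ T, y c) x (Pi.single a 1))
          * (x b * fderiv ℝ (fun y : Fin n → ℝ => ∏ c ∈ U, y c) x (Pi.single b 1)) := by
      ring
    rw [h1, prod_fderiv_single T x a, prod_fderiv_single U x b]
    by_cases ha : a ∈ T <;> by_cases hb : b ∈ U <;> simp [ha, hb]
  rw [Finset.sum_congr rfl (fun a _ => Finset.sum_congr rfl (fun b _ => hF a b))]
  simp only [Finset.sum_ite_irrel, Finset.sum_const_zero, Finset.sum_ite_mem,
    Finset.univ_inter]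
  rw [Finset.mul_sum]
  refine Finset.sum_congr rfl fun a _ => ?_
  rw [Finset.mul_sum]
  exact Finset.sum_congr rfl fun b _ => by ring

lemma Amat_antisymm (n k : ℕ) (a b : Fin n) : Amat n k a b = -(Amat n k b a) := by
  unfold Amat
  rcases lt_trichotomy a b with h | h | h
  · rw [if_pos h, if_neg (asymm h), if_pos h]; ring
  · subst h; simp
  · simp only [if_neg (asymm h), if_pos h]

lemma Amat_lt (n k : ℕ) (a b : Fin n) (hab : a.1 < b.1) :
    Amat n k a b = if k + b.1 < n + a.1 then 1 else -1 := by
  unfold Amat eps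
  rw [if_pos (Fin.lt_def.mpr hab)]
  exact if_congr (by omega) rfl rfl

lemma Amat_gt (n k : ℕ) (a b : Fin n) (hab : b.1 < a.1) :
    Amat n k a b = if k + a.1 < n + b.1 then -1 else 1 := by
  unfold Amat eps
  rw [if_neg (fun hc => by have := Fin.lt_def.mp hc; omega), if_pos (Fin.lt_def.mpr hab)]
  rcases lt_or_ge (k + a.1) (n + b.1) with h | h
  · rw [if_pos (by omega), if_pos h]
  · rw [if_neg (by omega), if_neg (by omega)]; ring

section Comb

variable (n k : ℕ)

/-- The index set of `P_k`. -/
noncomputable def Sset : Finset (Fin n) :=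
  univ.filter (fun a : Fin n => a.1 + 1 ≤ k ∨ n - k + 1 ≤ a.1 + 1)

variable (hk : 0 < k) (hn : 2 * k < n)

include hk hn in
lemma Sset_eq : Sset n k
    = Finset.Iio (⟨k, by omega⟩ : Fin n) ∪ Finset.Ici (⟨n - k, by omega⟩ : Fin n) := by
  ext a
  simp only [Sset, mem_filter, mem_univ, true_and, mem_union, mem_Iio, mem_Ici,
    Fin.lt_def, Fin.le_def]
  omega

include hk hn in
lemma Sset_disj : Disjoint (Finset.Iio (⟨k, by omega⟩ : Fin n))
    (Finset.Ici (⟨n - k, by omega⟩ : Fin n)) := by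
  rw [Finset.disjoint_left]
  intro a ha ha'
  rw [mem_Iio, Fin.lt_def] at ha
  rw [mem_Ici, Fin.le_def] at ha'
  simp only at ha ha'
  omega

include hk hn in
lemma sum_S_right (J : Fin n) (hJ : k ≤ J.1) (hJ2 : J.1 + k < n) :
    ∑ a ∈ Sset n k, Amat n k a J = 0 := by
  rw [Sset_eq n k hk hn, Finset.sum_union (Sset_disj n k hk hn)]
  have h1 : ∀ a ∈ Finset.Iio (⟨k, by omega⟩ : Fin n), Amat n k a J = 1 := by
    intro a ha
    rw [mem_Iio, Fin.lt_def] at ha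
    have ha' : a.1 < k := ha
    rw [Amat_lt n k a J (by omega), if_pos (by omega)]
  have h2 : ∀ a ∈ Finset.Ici (⟨n - k, by omega⟩ : Fin n), Amat n k a J = -1 := by
    intro a ha
    rw [mem_Ici, Fin.le_def] at ha
    have ha' : n - k ≤ a.1 := ha
    rw [Amat_gt n k a J (by omega), if_pos (by omega)]
  rw [Finset.sum_congr rfl h1, Finset.sum_congr rfl h2, Finset.sum_const,
    Finset.sum_const, Fin.card_Iio, Fin.card_Ici]
  simp only [nsmul_eq_mul, mul_one, mul_neg]
  have : (n : ℕ) - (n - k) = k := by omega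
  rw [this]
  ring

include hk hn in
lemma sum_S_left (I : Fin n) (hI : k ≤ I.1) (hI2 : I.1 + k < n) :
    ∑ b ∈ Sset n k, Amat n k I b = 0 := by
  rw [Sset_eq n k hk hn, Finset.sum_union (Sset_disj n k hk hn)]
  have h1 : ∀ b ∈ Finset.Iio (⟨k, by omega⟩ : Fin n), Amat n k I b = -1 := by
    intro b hb
    rw [mem_Iio, Fin.lt_def] at hb
    have hb' : b.1 < k := hb
    rw [Amat_gt n k I b (by omega), if_pos (by omega)]
  have h2 : ∀ b ∈ Finset.Ici (⟨n - k, by omega⟩ : Fin n), Amat n k I b = 1 := by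
    intro b hb
    rw [mem_Ici, Fin.le_def] at hb
    have hb' : n - k ≤ b.1 := hb
    rw [Amat_lt n k I b (by omega), if_pos (by omega)]
  rw [Finset.sum_congr rfl h1, Finset.sum_congr rfl h2, Finset.sum_const,
    Finset.sum_const, Fin.card_Iio, Fin.card_Ici]
  simp only [nsmul_eq_mul, mul_one, mul_neg]
  have : (n : ℕ) - (n - k) = k := by omega
  rw [this]
  ring

lemma sum_SS : ∑ a ∈ Sset n k, ∑ b ∈ Sset n k, Amat n k a b = 0 := by
  have h : ∑ a ∈ Sset n k, ∑ b ∈ Sset n k, Amat n k a b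
      = -∑ a ∈ Sset n k, ∑ b ∈ Sset n k, Amat n k a b := by
    refine Finset.sum_comm.trans ?_
    rw [← Finset.sum_neg_distrib]
    refine Finset.sum_congr rfl fun b _ => ?_
    rw [← Finset.sum_neg_distrib]
    exact Finset.sum_congr rfl fun a _ => Amat_antisymm n k a b
  linarith

end Comb

lemma Pk_eq (n k : ℕ) (x : Fin n → ℝ) : Pk n k x = ∏ a ∈ Sset n k, x a := rfl


/-- for `0 < 2k < n`, the map `φ_k : ℝ^n → ℝ^{n-2k}`,
`φ_k(x)_i = P_k x_{i+k}`, is Poisson from `π_k^{(n)}` to `π_0^{(n-2k)}`: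
`{P_k x_{i+k}, P_k x_{j+k}}_k^{(n)} = P_k² x_{i+k} x_{j+k}` for `1 ≤ i < j ≤ n-2k`. -/
theorem phi_poisson (n k : ℕ) (hk : 0 < k) (hn : 2 * k < n)
    (i j : Fin (n - 2 * k)) (hij : i < j) (x : Fin n → ℝ) :
    pb n k (fun y => Pk n k y * y ⟨i.1 + k, by have := i.isLt; omega⟩)
        (fun y => Pk n k y * y ⟨j.1 + k, by have := j.isLt; omega⟩) x
      = (Pk n k x) ^ 2 * x ⟨i.1 + k, by have := i.isLt; omega⟩
          * x ⟨j.1 + k, by have := j.isLt; omega⟩ := by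
  have hi := i.isLt
  have hj := j.isLt
  have hij' : i.1 < j.1 := hij
  set I : Fin n := ⟨i.1 + k, by omega⟩ with hIdef
  set J : Fin n := ⟨j.1 + k, by omega⟩ with hJdef
  have hIS : I ∉ Sset n k := by
    simp only [Sset, mem_filter, mem_univ, true_and, hIdef, not_or]
    constructor <;> omega
  have hJS : J ∉ Sset n k := by
    simp only [Sset, mem_filter, mem_univ, true_and, hJdef, not_or]
    constructor <;> omega
  have hf : (fun y : Fin n → ℝ => Pk n k y * y I)
      = fun y => ∏ a ∈ insert I (Sset n k), y a := by
    funext y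
    rw [Finset.prod_insert hIS, Pk_eq, mul_comm]
  have hg : (fun y : Fin n → ℝ => Pk n k y * y J)
      = fun y => ∏ a ∈ insert J (Sset n k), y a := by
    funext y
    rw [Finset.prod_insert hJS, Pk_eq, mul_comm]
  rw [hf, hg, pb_prod]
  have hsum : ∑ a ∈ insert I (Sset n k), ∑ b ∈ insert J (Sset n k), Amat n k a b = 1 := by
    rw [Finset.sum_insert hIS, Finset.sum_insert hJS,
      Finset.sum_congr rfl (fun a (_ : a ∈ Sset n k) => Finset.sum_insert (f := fun b => Amat n k a b) hJS),
      Finset.sum_add_distrib, sum_SS,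
      sum_S_left n k hk hn I (by simp only [hIdef]; omega) (by simp only [hIdef]; omega),
      sum_S_right n k hk hn J (by simp only [hJdef]; omega) (by simp only [hJdef]; omega),
      Amat_lt n k I J (by simp only [hIdef, hJdef]; omega), if_pos (by simp only [hIdef, hJdef]; omega)]
    ring
  rw [hsum, Finset.prod_insert hIS, Finset.prod_insert hJS, Pk_eq]
  ring
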